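/- arXiv:1901.06141 — 3 statements merged into one kernel-verified Lean document; each statement's English description precedes it below -/
import Mathlib

section
/- Let f = F(c*) be the objective vector produced by Algorithm 1, where c* is a unit vector in the span of the right-singular vectors of 𝓛 whose singular values are at most s_{i*}. Then ‖Df(x̄)ᵀᾱ‖₂ ≤ s_{i*} for every data point (x̄, ᾱ) ∈ 𝒟. In particular, if s_{i*} = 0, every data point is extended Pareto critical for f. -/
open scoped BigOperators
open Matrix

lemma myortho {m : ℕ} (A : Matrix (Fin m) (Fin m) ℝ) (hA : Aᵀ * A = 1)
    (v : Fin m → ℝ) : (A *ᵥ v) ⬝ᵥ (A *ᵥ v) = v ⬝ᵥ v := by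
  rw [dotProduct_mulVec]
  have h1 : (A *ᵥ v) ᵥ* A = v := by
    rw [show A *ᵥ v = v ᵥ* Aᵀ from (Matrix.vecMul_transpose A v).symm,
      Matrix.vecMul_vecMul, hA, Matrix.vecMul_one]
  rw [h1]

lemma mysum_dite {m N : ℕ} (hmN : m ≤ N) (t : Fin m → ℝ) :
    ∑ r : Fin N, (if h : (r : ℕ) < m then t ⟨r, h⟩ else 0) = ∑ q : Fin m, t q := by
  classical
  have hinj : Function.Injective (Fin.castLE hmN) := Fin.castLE_injective hmN
  calc ∑ r : Fin N, (if h : (r : ℕ) < m then t ⟨r, h⟩ else 0)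
      = ∑ r ∈ Finset.univ.image (Fin.castLE hmN),
          (if h : (r : ℕ) < m then t ⟨r, h⟩ else 0) := by
        refine (Finset.sum_subset (Finset.subset_univ _) ?_).symm
        intro x _ hx
        rw [dif_neg]
        intro hlt
        exact hx (Finset.mem_image.2 ⟨⟨x, hlt⟩, Finset.mem_univ _, rfl⟩)
    _ = ∑ q : Fin m, (if h : ((Fin.castLE hmN q : Fin N) : ℕ) < m then t ⟨_, h⟩ else 0) :=
        Finset.sum_image (fun x _ y _ h => hinj h)
    _ = ∑ q : Fin m, t q := by
        refine Finset.sum_congr rfl fun q _ => ?_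
        simp [Fin.castLE]

lemma mygrad {n d : ℕ} (c : Fin d → ℝ) (b : Fin d → EuclideanSpace ℝ (Fin n) → ℝ)
    (hb : ∀ l, Differentiable ℝ (b l)) (x : EuclideanSpace ℝ (Fin n)) :
    gradient (fun y => ∑ l, c l * b l y) x = ∑ l, c l • gradient (b l) x := by
  apply HasGradientAt.gradient
  rw [hasGradientAt_iff_hasFDerivAt]
  have h1 : (InnerProductSpace.toDual ℝ (EuclideanSpace ℝ (Fin n)))
        (∑ l, c l • gradient (b l) x)
      = ∑ l, c l • fderiv ℝ (b l) x := by
    rw [map_sum]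
    refine Finset.sum_congr rfl fun l _ => ?_
    rw [LinearIsometryEquiv.map_smulₛₗ]
    simp [gradient]
  rw [h1]
  exact HasFDerivAt.fun_sum fun l _ => ((hb l x).hasFDerivAt.const_mul (c l))

lemma mypi_sum_apply {n N : ℕ} (v : Fin N → EuclideanSpace ℝ (Fin n)) (m : Fin n) :
    (∑ i, v i) m = ∑ i, v i m := by
  induction (Finset.univ : Finset (Fin N)) using Finset.cons_induction with
  | empty => simp
  | cons a s ha ih => rw [Finset.sum_cons, Finset.sum_cons, ← ih]; rfl

/-- Theorem 3.5 of the paper: if `f = F(c*)` where `c*` is a unit vector in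
the span of the right-singular vectors of the stacked data matrix `𝓛` whose
singular values are at most `s i*`, then the KKT residual
`‖Df(x̄)ᵀᾱ‖₂ ≤ s i*` for every data point; in particular, if `s i* = 0`,
every data point is extended Pareto critical for `f`. -/
theorem algorithm_kkt_residual_bound {n d k N : ℕ} (hdim : k * d ≤ N * n)
    (b : Fin d → EuclideanSpace ℝ (Fin n) → ℝ)
    (hb : ∀ j, Differentiable ℝ (b j))
    (xd : Fin N → EuclideanSpace ℝ (Fin n)) (αd : Fin N → Fin k → ℝ)
    (hα : ∀ j, (∀ i, 0 ≤ αd j i) ∧ ∑ i, αd j i = 1)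
    (𝓛 : Matrix (Fin (N * n)) (Fin (k * d)) ℝ)
    (h𝓛 : ∀ (r : Fin (N * n)) (q : Fin (k * d)),
      𝓛 r q = αd (finProdFinEquiv.symm r).1 (finProdFinEquiv.symm q).1 *
        gradient (b (finProdFinEquiv.symm q).2) (xd (finProdFinEquiv.symm r).1)
          (finProdFinEquiv.symm r).2)
    (U : Matrix (Fin (N * n)) (Fin (N * n)) ℝ)
    (V : Matrix (Fin (k * d)) (Fin (k * d)) ℝ)
    (s : Fin (k * d) → ℝ)
    (hU : U ∈ Matrix.orthogonalGroup (Fin (N * n)) ℝ)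
    (hV : V ∈ Matrix.orthogonalGroup (Fin (k * d)) ℝ)
    (hs0 : ∀ i, 0 ≤ s i) (hmono : Monotone s)
    (hSVD : 𝓛 = U * (Matrix.of fun (r : Fin (N * n)) (q : Fin (k * d)) =>
      if (r : ℕ) = (q : ℕ) then s q else 0) * Vᵀ)
    (istar : Fin (k * d)) (cstar : Fin (k * d) → ℝ)
    (hunit : Real.sqrt (∑ q, cstar q ^ 2) = 1)
    (hspan : cstar ∈ Submodule.span ℝ
      {v : Fin (k * d) → ℝ | ∃ i ≤ istar, v = fun j => V j i})
    (f : Fin k → EuclideanSpace ℝ (Fin n) → ℝ)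
    (hf : ∀ (i : Fin k) (y : EuclideanSpace ℝ (Fin n)),
      f i y = ∑ l, cstar (finProdFinEquiv (i, l)) * b l y) :
    (∀ j, ‖∑ i, αd j i • gradient (f i) (xd j)‖ ≤ s istar) ∧
    (s istar = 0 → ∀ j, ∑ i, αd j i • gradient (f i) (xd j) = 0) := by
  classical
  have hVt : Vᵀ * V = 1 := by
    have := (Matrix.mem_orthogonalGroup_iff' (Fin (k * d)) ℝ).1 hV
    simpa using this
  have hVVt : V * Vᵀ = 1 := by
    have := (Matrix.mem_orthogonalGroup_iff (Fin (k * d)) ℝ).1 hV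
    simpa using this
  have hUt : Uᵀ * U = 1 := by
    have := (Matrix.mem_orthogonalGroup_iff' (Fin (N * n)) ℝ).1 hU
    simpa using this
  set D : Matrix (Fin (N * n)) (Fin (k * d)) ℝ :=
    Matrix.of fun (r : Fin (N * n)) (q : Fin (k * d)) =>
      if (r : ℕ) = (q : ℕ) then s q else 0 with hD
  set w : Fin (k * d) → ℝ := Vᵀ *ᵥ cstar with hw
  set y : Fin (N * n) → ℝ := 𝓛 *ᵥ cstar with hy
  -- tail of w vanishes
  have hwtail : ∀ q : Fin (k * d), istar < q → w q = 0 := by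
    intro q hq
    let φ : (Fin (k * d) → ℝ) →ₗ[ℝ] ℝ :=
      (LinearMap.proj q).comp (Matrix.mulVecLin Vᵀ)
    have hker : Submodule.span ℝ {v : Fin (k * d) → ℝ | ∃ i ≤ istar, v = fun j => V j i}
        ≤ LinearMap.ker φ := by
      rw [Submodule.span_le]
      rintro v ⟨i, hi, rfl⟩
      simp only [SetLike.mem_coe, LinearMap.mem_ker, φ, LinearMap.comp_apply,
        Matrix.mulVecLin_apply, LinearMap.proj_apply]
      have h1 : (Vᵀ *ᵥ fun j => V j i) q = (Vᵀ * V) q i := by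
        simp [Matrix.mulVec, Matrix.mul_apply, dotProduct]
      rw [h1, hVt, Matrix.one_apply, if_neg]
      intro hqi
      exact absurd (hqi ▸ hi) (not_le.2 hq)
    have hφ : φ cstar = 0 := hker hspan
    rw [hw]
    exact hφ
  -- norm of w
  have hcnorm : ∑ q, cstar q ^ 2 = 1 := by
    have hnn : 0 ≤ ∑ q, cstar q ^ 2 := Finset.sum_nonneg fun q _ => sq_nonneg _
    nlinarith [Real.sq_sqrt hnn]
  have hwnorm : ∑ q, w q ^ 2 = 1 := by
    have h2 : w ⬝ᵥ w = cstar ⬝ᵥ cstar :=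
      myortho Vᵀ (by rw [Matrix.transpose_transpose]; exact hVVt) cstar
    calc ∑ q, w q ^ 2 = w ⬝ᵥ w := by simp [dotProduct, sq]
      _ = cstar ⬝ᵥ cstar := h2
      _ = 1 := by simpa [dotProduct, sq] using hcnorm
  have hyUDw : y = U *ᵥ (D *ᵥ w) := by
    rw [hy, hSVD, hw, Matrix.mulVec_mulVec, Matrix.mulVec_mulVec]
  have hDw : ∀ r, (D *ᵥ w) r = if h : (r : ℕ) < k * d then s ⟨r, h⟩ * w ⟨r, h⟩ else 0 := by
    intro r
    simp only [Matrix.mulVec, dotProduct, hD, Matrix.of_apply]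
    split
    next h =>
      rw [Finset.sum_eq_single (⟨(r : ℕ), h⟩ : Fin (k * d))]
      · simp
      · intro q _ hq
        have hne : ¬((r : ℕ) = (q : ℕ)) := fun hc => hq (by exact Fin.ext hc.symm)
        simp [hne]
      · simp
    next h =>
      apply Finset.sum_eq_zero
      intro q _
      have hne : ¬((r : ℕ) = (q : ℕ)) := fun hc => h (hc ▸ q.isLt)
      simp [hne]
  have hysq : y ⬝ᵥ y ≤ s istar ^ 2 := by
    rw [hyUDw, myortho U hUt _]
    have hsum : (D *ᵥ w) ⬝ᵥ (D *ᵥ w) = ∑ q, (s q * w q) ^ 2 := by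
      rw [show (D *ᵥ w) ⬝ᵥ (D *ᵥ w) = ∑ r, ((D *ᵥ w) r) ^ 2 from by
        simp [dotProduct, sq]]
      rw [← mysum_dite hdim (fun q => (s q * w q) ^ 2)]
      refine Finset.sum_congr rfl fun r _ => ?_
      rw [hDw r]
      split <;> simp
    rw [hsum]
    calc ∑ q, (s q * w q) ^ 2 ≤ ∑ q, s istar ^ 2 * w q ^ 2 := by
          refine Finset.sum_le_sum fun q _ => ?_
          rcases le_or_gt q istar with hle | hlt
          · rw [mul_pow]
            exact mul_le_mul_of_nonneg_right
              (pow_le_pow_left₀ (hs0 q) (hmono hle) 2) (sq_nonneg _)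
          · rw [hwtail q hlt]
            simp
      _ = s istar ^ 2 * ∑ q, w q ^ 2 := by rw [Finset.mul_sum]
      _ = s istar ^ 2 := by rw [hwnorm, mul_one]
  -- gradient identity
  have hgrad : ∀ (j : Fin N) (m : Fin n),
      (∑ i, αd j i • gradient (f i) (xd j)) m = y (finProdFinEquiv (j, m)) := by
    intro j m
    have hfi : ∀ i, gradient (f i) (xd j)
        = ∑ l, cstar (finProdFinEquiv (i, l)) • gradient (b l) (xd j) := by
      intro i
      rw [show f i = fun z => ∑ l, cstar (finProdFinEquiv (i, l)) * b l z from funext (hf i)]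
      exact mygrad _ b hb _
    have hL : (∑ i, αd j i • gradient (f i) (xd j)) m
        = ∑ i, ∑ l, αd j i * (cstar (finProdFinEquiv (i, l)) * gradient (b l) (xd j) m) := by
      rw [mypi_sum_apply]
      refine Finset.sum_congr rfl fun i _ => ?_
      rw [show (αd j i • gradient (f i) (xd j)) m = αd j i * gradient (f i) (xd j) m from rfl,
        hfi i, mypi_sum_apply, Finset.mul_sum]
      exact Finset.sum_congr rfl fun l _ => rfl
    have hR : y (finProdFinEquiv (j, m))
        = ∑ i, ∑ l, αd j i * (cstar (finProdFinEquiv (i, l)) * gradient (b l) (xd j) m) := by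
      rw [hy]
      show ∑ q, 𝓛 (finProdFinEquiv (j, m)) q * cstar q = _
      rw [← Equiv.sum_comp finProdFinEquiv
        (fun q => 𝓛 (finProdFinEquiv (j, m)) q * cstar q), Fintype.sum_prod_type]
      refine Finset.sum_congr rfl fun i _ => Finset.sum_congr rfl fun l _ => ?_
      rw [h𝓛]
      have h2 : finProdFinEquiv.symm (finProdFinEquiv (j, m)) = (j, m) :=
        Equiv.symm_apply_apply _ _
      have h3 : finProdFinEquiv.symm (finProdFinEquiv (i, l)) = (i, l) :=
        Equiv.symm_apply_apply _ _
      rw [h2, h3]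
      ring
    rw [hL, hR]
  have hbound : ∀ j, ‖∑ i, αd j i • gradient (f i) (xd j)‖ ≤ s istar := by
    intro j
    rw [EuclideanSpace.norm_eq]
    have h1 : ∑ m, ‖(∑ i, αd j i • gradient (f i) (xd j)) m‖ ^ 2
        = ∑ m : Fin n, y (finProdFinEquiv (j, m)) ^ 2 := by
      refine Finset.sum_congr rfl fun m _ => ?_
      rw [hgrad j m, Real.norm_eq_abs, sq_abs]
    rw [h1]
    have h2 : ∑ m : Fin n, y (finProdFinEquiv (j, m)) ^ 2 ≤ y ⬝ᵥ y := by
      have hinj : ∀ x ∈ (Finset.univ : Finset (Fin n)), ∀ z ∈ Finset.univ,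
          finProdFinEquiv (j, x) = finProdFinEquiv (j, z) → x = z := by
        intro x _ z _ h
        have := finProdFinEquiv.injective h
        exact (Prod.mk.injEq _ _ _ _ ▸ this).2
      have him : ∑ m : Fin n, y (finProdFinEquiv (j, m)) ^ 2
          = ∑ r ∈ Finset.univ.image (fun m : Fin n => finProdFinEquiv (j, m)), y r ^ 2 :=
        (Finset.sum_image (s := Finset.univ)
          (g := fun m : Fin n => finProdFinEquiv (j, m))
          (f := fun r => y r ^ 2) hinj).symm
      rw [him, show y ⬝ᵥ y = ∑ r, y r ^ 2 from by simp [dotProduct, sq]]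
      exact Finset.sum_le_sum_of_subset_of_nonneg (Finset.subset_univ _)
        fun r _ _ => sq_nonneg _
    calc Real.sqrt (∑ m : Fin n, y (finProdFinEquiv (j, m)) ^ 2)
        ≤ Real.sqrt (s istar ^ 2) := Real.sqrt_le_sqrt (h2.trans hysq)
      _ = s istar := Real.sqrt_sq (hs0 istar)
  refine ⟨hbound, fun hzero j => ?_⟩
  have h := hbound j
  rw [hzero] at h
  exact norm_le_zero_iff.1 h
end

section
/- Consider f : ℝ² → ℝ², f(x) = (−3x₁ + x₁³ + x₂³, −3x₂ + x₁³ + x₂³). A point x ∈ ℝ² is Pareto critical for f if and only if x₁² + x₂² = 1, and in that case the (unique) KKT vector is α = (x₁², x₂²)ᵀ. That is, the Pareto critical set of f is exactly the unit circle S¹. -/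
open scoped BigOperators

noncomputable def circF1 (y : EuclideanSpace ℝ (Fin 2)) : ℝ :=
  -3 * y 0 + (y 0) ^ 3 + (y 1) ^ 3

noncomputable def circF2 (y : EuclideanSpace ℝ (Fin 2)) : ℝ :=
  -3 * y 1 + (y 0) ^ 3 + (y 1) ^ 3

lemma circGrad1 (x : EuclideanSpace ℝ (Fin 2)) :
    gradient circF1 x = (WithLp.equiv 2 (Fin 2 → ℝ)).symm ![-3 + 3 * (x 0)^2, 3 * (x 1)^2] := by
  apply HasGradientAt.gradient
  rw [hasGradientAt_iff_hasFDerivAt]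
  have h0 : HasFDerivAt (fun y : EuclideanSpace ℝ (Fin 2) => y 0)
      (EuclideanSpace.proj (0 : Fin 2) : EuclideanSpace ℝ (Fin 2) →L[ℝ] ℝ) x :=
    (EuclideanSpace.proj (0:Fin 2) : EuclideanSpace ℝ (Fin 2) →L[ℝ] ℝ).hasFDerivAt (x := x)
  have h1 : HasFDerivAt (fun y : EuclideanSpace ℝ (Fin 2) => y 1)
      (EuclideanSpace.proj (1 : Fin 2) : EuclideanSpace ℝ (Fin 2) →L[ℝ] ℝ) x :=
    (EuclideanSpace.proj (1:Fin 2) : EuclideanSpace ℝ (Fin 2) →L[ℝ] ℝ).hasFDerivAt (x := x)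
  have H : HasFDerivAt circF1
      (((-3 : ℝ) • (EuclideanSpace.proj (0:Fin 2) : EuclideanSpace ℝ (Fin 2) →L[ℝ] ℝ) +
        ((3:ℕ) * (x 0)^2) • (EuclideanSpace.proj (0:Fin 2) : EuclideanSpace ℝ (Fin 2) →L[ℝ] ℝ)) +
        ((3:ℕ) * (x 1)^2) • (EuclideanSpace.proj (1:Fin 2) : EuclideanSpace ℝ (Fin 2) →L[ℝ] ℝ)) x :=
    by
      have h0' : HasFDerivAt (𝕜 := ℝ) (F := ℝ) (fun y : EuclideanSpace ℝ (Fin 2) => y 0)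
          (EuclideanSpace.proj (0:Fin 2) : EuclideanSpace ℝ (Fin 2) →L[ℝ] ℝ) x := by exact h0
      have h1' : HasFDerivAt (𝕜 := ℝ) (F := ℝ) (fun y : EuclideanSpace ℝ (Fin 2) => y 1)
          (EuclideanSpace.proj (1:Fin 2) : EuclideanSpace ℝ (Fin 2) →L[ℝ] ℝ) x := by exact h1
      exact ((h0'.const_mul (-3)).add ((hasDerivAt_pow 3 (x 0)).comp_hasFDerivAt x h0')).add
        ((hasDerivAt_pow 3 (x 1)).comp_hasFDerivAt x h1')
  refine H.congr_fderiv ?_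
  ext y
  simp [InnerProductSpace.toDual_apply_apply, EuclideanSpace.inner_eq_star_dotProduct, Matrix.vecHead, Matrix.vecTail]
  ring

lemma circGrad2 (x : EuclideanSpace ℝ (Fin 2)) :
    gradient circF2 x = (WithLp.equiv 2 (Fin 2 → ℝ)).symm ![3 * (x 0)^2, -3 + 3 * (x 1)^2] := by
  apply HasGradientAt.gradient
  rw [hasGradientAt_iff_hasFDerivAt]
  have h0 : HasFDerivAt (fun y : EuclideanSpace ℝ (Fin 2) => y 0)
      (EuclideanSpace.proj (0 : Fin 2) : EuclideanSpace ℝ (Fin 2) →L[ℝ] ℝ) x :=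
    (EuclideanSpace.proj (0:Fin 2) : EuclideanSpace ℝ (Fin 2) →L[ℝ] ℝ).hasFDerivAt (x := x)
  have h1 : HasFDerivAt (fun y : EuclideanSpace ℝ (Fin 2) => y 1)
      (EuclideanSpace.proj (1 : Fin 2) : EuclideanSpace ℝ (Fin 2) →L[ℝ] ℝ) x :=
    (EuclideanSpace.proj (1:Fin 2) : EuclideanSpace ℝ (Fin 2) →L[ℝ] ℝ).hasFDerivAt (x := x)
  have H : HasFDerivAt circF2
      (((-3 : ℝ) • (EuclideanSpace.proj (1:Fin 2) : EuclideanSpace ℝ (Fin 2) →L[ℝ] ℝ) +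
        ((3:ℕ) * (x 0)^2) • (EuclideanSpace.proj (0:Fin 2) : EuclideanSpace ℝ (Fin 2) →L[ℝ] ℝ)) +
        ((3:ℕ) * (x 1)^2) • (EuclideanSpace.proj (1:Fin 2) : EuclideanSpace ℝ (Fin 2) →L[ℝ] ℝ)) x :=
    by
      have h0' : HasFDerivAt (𝕜 := ℝ) (F := ℝ) (fun y : EuclideanSpace ℝ (Fin 2) => y 0)
          (EuclideanSpace.proj (0:Fin 2) : EuclideanSpace ℝ (Fin 2) →L[ℝ] ℝ) x := by exact h0
      have h1' : HasFDerivAt (𝕜 := ℝ) (F := ℝ) (fun y : EuclideanSpace ℝ (Fin 2) => y 1)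
          (EuclideanSpace.proj (1:Fin 2) : EuclideanSpace ℝ (Fin 2) →L[ℝ] ℝ) x := by exact h1
      exact ((h1'.const_mul (-3)).add ((hasDerivAt_pow 3 (x 0)).comp_hasFDerivAt x h0')).add
        ((hasDerivAt_pow 3 (x 1)).comp_hasFDerivAt x h1')
  refine H.congr_fderiv ?_
  ext y
  simp [InnerProductSpace.toDual_apply_apply, EuclideanSpace.inner_eq_star_dotProduct, Matrix.vecHead, Matrix.vecTail]
  ring

/-- For `f(x) = (−3x₁+x₁³+x₂³, −3x₂+x₁³+x₂³)`, a point is Pareto critical iff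
it lies on the unit circle, and then the (unique) KKT vector is
`α = (x₁², x₂²)`. -/
theorem paretoCritical_unit_circle (x : EuclideanSpace ℝ (Fin 2)) :
    ((∃ α : Fin 2 → ℝ, (∀ i, 0 ≤ α i) ∧ α 0 + α 1 = 1 ∧
        α 0 • gradient circF1 x + α 1 • gradient circF2 x = 0) ↔
      (x 0) ^ 2 + (x 1) ^ 2 = 1) ∧
    (∀ α : Fin 2 → ℝ, (∀ i, 0 ≤ α i) → α 0 + α 1 = 1 →
      α 0 • gradient circF1 x + α 1 • gradient circF2 x = 0 →
      α 0 = (x 0) ^ 2 ∧ α 1 = (x 1) ^ 2) := by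
  have key : ∀ α : Fin 2 → ℝ, α 0 + α 1 = 1 →
      α 0 • gradient circF1 x + α 1 • gradient circF2 x = 0 →
      α 0 = (x 0) ^ 2 ∧ α 1 = (x 1) ^ 2 := by
    intro α hsum heq
    rw [circGrad1, circGrad2] at heq
    have e0 : (α 0 • (WithLp.equiv 2 (Fin 2 → ℝ)).symm ![-3 + 3 * (x 0)^2, 3 * (x 1)^2]
        + α 1 • (WithLp.equiv 2 (Fin 2 → ℝ)).symm ![3 * (x 0)^2, -3 + 3 * (x 1)^2]) 0 = 0 := by
      rw [heq]; rfl
    have e1 : (α 0 • (WithLp.equiv 2 (Fin 2 → ℝ)).symm ![-3 + 3 * (x 0)^2, 3 * (x 1)^2]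
        + α 1 • (WithLp.equiv 2 (Fin 2 → ℝ)).symm ![3 * (x 0)^2, -3 + 3 * (x 1)^2]) 1 = 0 := by
      rw [heq]; rfl
    simp [PiLp.add_apply, PiLp.smul_apply, smul_eq_mul] at e0 e1
    constructor
    · linear_combination (-1/3) * e0 + (x 0)^2 * hsum
    · linear_combination (-1/3) * e1 + (x 1)^2 * hsum
  constructor
  · constructor
    · rintro ⟨α, _, hsum, heq⟩
      obtain ⟨h0, h1⟩ := key α hsum heq
      rw [← h0, ← h1, hsum]
    · intro h
      refine ⟨![(x 0)^2, (x 1)^2], ?_, ?_, ?_⟩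
      · intro i; fin_cases i <;> simp [sq_nonneg]
      · simpa using h
      · rw [circGrad1, circGrad2]
        ext i
        fin_cases i
        · simp [PiLp.add_apply, PiLp.smul_apply, smul_eq_mul]
          linear_combination 3 * (x 0)^2 * h
        · simp [PiLp.add_apply, PiLp.smul_apply, smul_eq_mul]
          linear_combination 3 * (x 1)^2 * h
  · intro α _ hsum heq
    exact key α hsum heq
end

section
/- Let f₁, f₂ : ℝⁿ → ℝ be strictly convex and differentiable. Then every Pareto critical point of (f₁, f₂) is Pareto optimal. -/
open Set

lemma inner_gradient_lt_sub_of_strictConvexOn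
    {E : Type*} [NormedAddCommGroup E] [InnerProductSpace ℝ E] [CompleteSpace E]
    {f : E → ℝ} (hf : StrictConvexOn ℝ Set.univ f) (hd : Differentiable ℝ f)
    (x y : E) (hxy : y ≠ x) :
    inner ℝ (gradient f x) (y - x) < f y - f x := by
  set d : E := y - x with hd_def
  have hdne : d ≠ 0 := sub_ne_zero.mpr hxy
  set g : ℝ → ℝ := fun t => f (x + t • d) with hg_def
  have hg : StrictConvexOn ℝ Set.univ g := by
    refine ⟨convex_univ, fun a _ b _ hab la lb hla hlb hsum => ?_⟩
    have hne : x + a • d ≠ x + b • d := by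
      intro h
      apply hab
      have := add_left_cancel h
      exact smul_left_injective ℝ hdne this
    have key := hf.2 (Set.mem_univ (x + a • d)) (Set.mem_univ (x + b • d)) hne hla hlb hsum
    have harg : la • (x + a • d) + lb • (x + b • d) = x + (la • a + lb • b) • d := by
      rw [smul_add, smul_add, smul_smul, smul_smul]
      rw [show la • x + (la * a) • d + (lb • x + (lb * b) • d)
        = (la + lb) • x + (la * a + lb * b) • d by module, hsum]
      simp [add_smul]
    rw [harg] at key
    simpa [hg_def, smul_eq_mul] using key
  have hγ : HasDerivAt (fun t : ℝ => x + t • d) d 0 := by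
    simpa using ((hasDerivAt_id (0:ℝ)).smul_const d).const_add x
  have hF : HasFDerivAt f (fderiv ℝ f x) x := (hd x).hasFDerivAt
  have hF0 : HasFDerivAt f (fderiv ℝ f x) ((fun t : ℝ => x + t • d) 0) := by simpa using hF
  have hgderiv : HasDerivAt g (fderiv ℝ f x d) 0 := hF0.comp_hasDerivAt 0 hγ
  have hinner : (fderiv ℝ f x) d = inner ℝ (gradient f x) d := by
    have h1 : HasGradientAt f (gradient f x) x := (hd x).hasGradientAt
    rw [hasGradientAt_iff_hasFDerivAt] at h1
    have := h1.unique hF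
    rw [← this]
    simp [InnerProductSpace.toDual_apply_apply]
  have hslope := hg.lt_slope_of_hasDerivAt (Set.mem_univ (0:ℝ)) (Set.mem_univ (1:ℝ))
    one_pos hgderiv
  have hs : slope g 0 1 = f y - f x := by
    simp [slope_def_field, hg_def, hd_def]
  rw [hs, hinner] at hslope
  exact hslope

/-- For two strictly convex differentiable objectives, every Pareto critical
point is Pareto optimal. -/
theorem paretoOptimal_of_paretoCritical_strictConvex {n : ℕ}
    (f₁ f₂ : EuclideanSpace ℝ (Fin n) → ℝ)
    (h₁ : StrictConvexOn ℝ Set.univ f₁) (h₂ : StrictConvexOn ℝ Set.univ f₂)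
    (hd₁ : Differentiable ℝ f₁) (hd₂ : Differentiable ℝ f₂)
    (x : EuclideanSpace ℝ (Fin n))
    (hcrit : ∃ α : Fin 2 → ℝ, (∀ i, 0 ≤ α i) ∧ α 0 + α 1 = 1 ∧
      α 0 • gradient f₁ x + α 1 • gradient f₂ x = 0) :
    ¬ ∃ y, (f₁ y ≤ f₁ x ∧ f₂ y ≤ f₂ x) ∧ (f₁ y < f₁ x ∨ f₂ y < f₂ x) := by
  rintro ⟨y, ⟨hle1, hle2⟩, hlt⟩
  obtain ⟨α, hαpos, hαsum, hαgrad⟩ := hcrit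
  have hyx : y ≠ x := by
    rintro rfl
    rcases hlt with h | h <;> exact absurd h (lt_irrefl _)
  have k1 : inner ℝ (gradient f₁ x) (y - x) < (0:ℝ) :=
    lt_of_lt_of_le (inner_gradient_lt_sub_of_strictConvexOn h₁ hd₁ x y hyx)
      (by linarith)
  have k2 : inner ℝ (gradient f₂ x) (y - x) < (0:ℝ) :=
    lt_of_lt_of_le (inner_gradient_lt_sub_of_strictConvexOn h₂ hd₂ x y hyx)
      (by linarith)
  have hz : α 0 * inner ℝ (gradient f₁ x) (y - x)
      + α 1 * inner ℝ (gradient f₂ x) (y - x) = (0:ℝ) := by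
    have : inner ℝ (α 0 • gradient f₁ x + α 1 • gradient f₂ x) (y - x) = (0:ℝ) := by
      rw [hαgrad]; simp
    rwa [inner_add_left, real_inner_smul_left, real_inner_smul_left] at this
  have h0 := hαpos 0
  have h1' := hαpos 1
  have m1 : α 0 * inner ℝ (gradient f₁ x) (y - x) ≤ 0 :=
    mul_nonpos_of_nonneg_of_nonpos h0 k1.le
  have m2 : α 1 * inner ℝ (gradient f₂ x) (y - x) ≤ 0 :=
    mul_nonpos_of_nonneg_of_nonpos h1' k2.le
  have e1 : α 0 * inner ℝ (gradient f₁ x) (y - x) = 0 := by linarith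
  have e2 : α 1 * inner ℝ (gradient f₂ x) (y - x) = 0 := by linarith
  have z1 : α 0 = 0 := by
    rcases mul_eq_zero.mp e1 with h | h
    · exact h
    · exact absurd h k1.ne
  have z2 : α 1 = 0 := by
    rcases mul_eq_zero.mp e2 with h | h
    · exact h
    · exact absurd h k2.ne
  linarith
end
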